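/- Let G be a discrete group and p ∈ (1,∞). Suppose that for every finite subset E ⊆ G containing the identity, ‖Σ_{t∈E} λ_p(t)‖ = |E| as an operator on ℓ^p(G). Then G is amenable, i.e. there exists a net (f_α) in ℓ^p(G) with f_α ≥ 0, ‖f_α‖_p = 1, and ‖λ_p(s)f_α − f_α‖_p → 0 for all s ∈ G. -/

import Mathlib

open scoped ENNReal NNReal ComplexOrder
open Filter Topology

/-- `lam` is the left regular representation: `lam s` sends `δ_t` to `δ_{s t}`. -/
def IsLeftReg {G : Type*} [Group G] [DecidableEq G] {p : ℝ≥0∞} [Fact (1 ≤ p)]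
    (lam : G → (lp (fun _ : G => ℂ) p →L[ℂ] lp (fun _ : G => ℂ) p)) : Prop :=
  ∀ s t : G, lam s (lp.single (E := fun _ : G => ℂ) p t 1) =
    lp.single (E := fun _ : G => ℂ) p (s * t) 1

/-- `rho` is the right regular representation: `rho s` sends `δ_t` to `δ_{t s⁻¹}`. -/
def IsRightReg {G : Type*} [Group G] [DecidableEq G] {p : ℝ≥0∞} [Fact (1 ≤ p)]
    (rho : G → (lp (fun _ : G => ℂ) p →L[ℂ] lp (fun _ : G => ℂ) p)) : Prop :=
  ∀ s t : G, rho s (lp.single (E := fun _ : G => ℂ) p t 1) =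
    lp.single (E := fun _ : G => ℂ) p (t * s⁻¹) 1

/-- Extension of a representation to finitely supported functions: `opOf lam f = Σ_s f(s) • lam s`. -/
noncomputable def opOf {G : Type*} [Group G] {p : ℝ≥0∞} [Fact (1 ≤ p)]
    (lam : G → (lp (fun _ : G => ℂ) p →L[ℂ] lp (fun _ : G => ℂ) p)) (f : G →₀ ℂ) :
    lp (fun _ : G => ℂ) p →L[ℂ] lp (fun _ : G => ℂ) p :=
  f.sum fun s c => c • lam s

/-- A vector in `ℓ^p(G)` is nonnegative if all its coordinates are nonnegative reals. -/
def IsNonneg {G : Type*} {p : ℝ≥0∞} [Fact (1 ≤ p)] (ξ : lp (fun _ : G => ℂ) p) : Prop :=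
  ∀ t : G, 0 ≤ ξ t

section Ground
variable {G : Type*} [Group G] [DecidableEq G] {p : ℝ≥0∞} [Fact (1 ≤ p)]

set_option maxHeartbeats 1000000

/-- left multiplication equiv -/
def mulL {G : Type*} [Group G] (s : G) : G ≃ G :=
  ⟨fun g => s * g, fun g => s⁻¹ * g, fun g => by simp, fun g => by simp⟩

lemma hr_pos (hp' : p ≠ ⊤) : 0 < p.toReal :=
  ENNReal.toReal_pos (zero_lt_one.trans_le (Fact.out : 1 ≤ p)).ne' hp'

/-- translate of an lp function -/
noncomputable def transl (hp' : p ≠ ⊤) (s : G) (x : lp (fun _ : G => ℂ) p) :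
    lp (fun _ : G => ℂ) p :=
  ⟨fun g => x (s⁻¹ * g), by
    apply memℓp_gen
    have h1 : Summable fun g : G => ‖x g‖ ^ p.toReal := (lp.memℓp x).summable (hr_pos hp')
    exact ((mulL s⁻¹).summable_iff (f := fun g : G => ‖x g‖ ^ p.toReal)).2 h1⟩

@[simp] lemma transl_apply (hp' : p ≠ ⊤) (s : G) (x : lp (fun _ : G => ℂ) p) (g : G) :
    transl hp' s x g = x (s⁻¹ * g) := rfl

lemma lam_eq_transl (hp' : p ≠ ⊤) {lam : G → (lp (fun _ : G => ℂ) p →L[ℂ] lp (fun _ : G => ℂ) p)}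
    (hlam : IsLeftReg lam) (s : G) (x : lp (fun _ : G => ℂ) p) :
    lam s x = transl hp' s x := by
  have h1 : HasSum (fun t : G => lp.single p (s * t) (x t)) (transl hp' s x) := by
    have h0 := lp.hasSum_single hp' (transl hp' s x)
    have h2 := ((mulL s).hasSum_iff
      (f := fun u : G => lp.single p u (transl hp' s x u)) (a := transl hp' s x)).2 h0
    have h3 : ((fun u : G => lp.single p u (transl hp' s x u)) ∘ (mulL s)) =
        fun t : G => lp.single p (s * t) (x t) := by
      funext t
      simp [Function.comp, mulL, transl_apply]
    rwa [h3] at h2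
  have h4 : HasSum (fun t : G => lam s (lp.single p t (x t))) (lam s x) :=
    (lam s).hasSum (lp.hasSum_single hp' x)
  have h5 : ∀ t : G, lam s (lp.single p t (x t)) = lp.single p (s * t) (x t) := by
    intro t
    have e1 : lp.single p t (x t) = (x t) • lp.single (E := fun _ : G => ℂ) p t 1 := by
      rw [← lp.single_smul]
      norm_num
    rw [e1, map_smul, hlam s t, ← lp.single_smul]
    norm_num
  rw [funext h5] at h4
  exact h4.unique h1

lemma lam_apply (hp' : p ≠ ⊤) {lam : G → (lp (fun _ : G => ℂ) p →L[ℂ] lp (fun _ : G => ℂ) p)}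
    (hlam : IsLeftReg lam) (s : G) (x : lp (fun _ : G => ℂ) p) (g : G) :
    lam s x g = x (s⁻¹ * g) := by
  rw [lam_eq_transl hp' hlam s x]; rfl

lemma lam_norm (hp' : p ≠ ⊤) {lam : G → (lp (fun _ : G => ℂ) p →L[ℂ] lp (fun _ : G => ℂ) p)}
    (hlam : IsLeftReg lam) (s : G) (x : lp (fun _ : G => ℂ) p) :
    ‖lam s x‖ = ‖x‖ := by
  rw [lam_eq_transl hp' hlam s x]
  rw [lp.norm_eq_tsum_rpow (hr_pos hp'), lp.norm_eq_tsum_rpow (hr_pos hp')]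
  congr 1
  have := (mulL s⁻¹).tsum_eq (f := fun g : G => ‖x g‖ ^ p.toReal)
  calc ∑' (g : G), ‖transl hp' s x g‖ ^ p.toReal
      = ∑' (g : G), ‖x (s⁻¹ * g)‖ ^ p.toReal := by rfl
    _ = ∑' (g : G), ‖x g‖ ^ p.toReal := by simpa [mulL] using this

lemma lam_one (hp' : p ≠ ⊤) {lam : G → (lp (fun _ : G => ℂ) p →L[ℂ] lp (fun _ : G => ℂ) p)}
    (hlam : IsLeftReg lam) (x : lp (fun _ : G => ℂ) p) :
    lam 1 x = x := by
  ext g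
  rw [lam_apply hp' hlam 1 x g]
  simp

/-- coordinatewise absolute value -/
noncomputable def absv (hp' : p ≠ ⊤) (x : lp (fun _ : G => ℂ) p) : lp (fun _ : G => ℂ) p :=
  ⟨fun g => (‖x g‖ : ℂ), by
    apply memℓp_gen
    have h1 : Summable fun g : G => ‖x g‖ ^ p.toReal := (lp.memℓp x).summable (hr_pos hp')
    apply h1.congr
    intro g
    simp⟩

@[simp] lemma absv_apply (hp' : p ≠ ⊤) (x : lp (fun _ : G => ℂ) p) (g : G) :
    absv hp' x g = (‖x g‖ : ℂ) := rfl

lemma absv_nonneg (hp' : p ≠ ⊤) (x : lp (fun _ : G => ℂ) p) : IsNonneg (absv hp' x) := by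
  intro g
  rw [absv_apply]
  rw [Complex.le_def]
  simp [norm_nonneg]

lemma absv_norm (hp' : p ≠ ⊤) (x : lp (fun _ : G => ℂ) p) : ‖absv hp' x‖ = ‖x‖ := by
  rw [lp.norm_eq_tsum_rpow (hr_pos hp'), lp.norm_eq_tsum_rpow (hr_pos hp')]
  congr 1
  apply tsum_congr
  intro g
  simp

lemma norm_le_of_coord (hp' : p ≠ ⊤) (x y : lp (fun _ : G => ℂ) p)
    (h : ∀ g, ‖x g‖ ≤ ‖y g‖) : ‖x‖ ≤ ‖y‖ := by
  rw [lp.norm_eq_tsum_rpow (hr_pos hp'), lp.norm_eq_tsum_rpow (hr_pos hp')]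
  apply Real.rpow_le_rpow (tsum_nonneg fun g => Real.rpow_nonneg (norm_nonneg _) _)
  · apply Summable.tsum_le_tsum _ ((lp.memℓp x).summable (hr_pos hp')) ((lp.memℓp y).summable (hr_pos hp'))
    intro g
    exact Real.rpow_le_rpow (norm_nonneg _) (h g) (hr_pos hp').le
  · positivity

end Ground

lemma real_superadd_sq {q : ℝ} (hq : 1 ≤ q) {a b : ℝ} (ha : 0 ≤ a) (hb : 0 ≤ b) :
    a ^ (2*q) + b ^ (2*q) ≤ (a ^ (2:ℝ) + b ^ (2:ℝ)) ^ q := by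
  lift a to ℝ≥0 using ha
  lift b to ℝ≥0 using hb
  rw [← NNReal.coe_rpow, ← NNReal.coe_rpow, ← NNReal.coe_rpow, ← NNReal.coe_rpow,
    ← NNReal.coe_add, ← NNReal.coe_add, ← NNReal.coe_rpow, NNReal.coe_le_coe]
  calc a ^ (2*q) + b ^ (2*q) = (a ^ (2:ℝ)) ^ q + (b ^ (2:ℝ)) ^ q := by
        rw [← NNReal.rpow_mul, ← NNReal.rpow_mul]
    _ ≤ (a ^ (2:ℝ) + b ^ (2:ℝ)) ^ q := NNReal.add_rpow_le_rpow_add _ _ hq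

lemma real_pow_mean {q : ℝ} (hq : 1 ≤ q) {a b : ℝ} (ha : 0 ≤ a) (hb : 0 ≤ b) :
    (a + b) ^ q ≤ 2 ^ (q - 1) * (a ^ q + b ^ q) := by
  lift a to ℝ≥0 using ha
  lift b to ℝ≥0 using hb
  have := NNReal.rpow_add_le_mul_rpow_add_rpow a b hq
  have h2 := NNReal.coe_le_coe.2 this
  push_cast at h2
  convert h2 using 3 <;> norm_num

lemma clarkson {r : ℝ} (hr : 2 ≤ r) {x y : ℝ} (hx : 0 ≤ x) (hy : 0 ≤ y) :
    |x - y| ^ r + (x + y) ^ r ≤ 2 ^ (r - 1) * (x ^ r + y ^ r) := by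
  have hq : (1:ℝ) ≤ r/2 := by linarith
  have ha0 : (0:ℝ) ≤ |x - y| := abs_nonneg _
  have hb0 : (0:ℝ) ≤ x + y := by linarith
  have e0 : ∀ z : ℝ, z ^ (2*(r/2)) = z ^ r := by intro z; congr 1; ring
  have key1 : |x - y| ^ r + (x + y) ^ r ≤ (|x - y| ^ (2:ℝ) + (x + y) ^ (2:ℝ)) ^ (r/2) := by
    rw [← e0 (|x-y|), ← e0 (x+y)]
    exact real_superadd_sq hq ha0 hb0
  have e2 : |x - y| ^ (2:ℝ) + (x + y) ^ (2:ℝ) = 2 * (x ^ (2:ℝ) + y ^ (2:ℝ)) := by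
    rw [show ((2:ℝ)) = ((2:ℕ):ℝ) by norm_num]
    rw [Real.rpow_natCast, Real.rpow_natCast, Real.rpow_natCast, Real.rpow_natCast]
    rw [sq_abs]
    ring
  have key2 : (2 * (x ^ (2:ℝ) + y ^ (2:ℝ))) ^ (r/2)
      = 2 ^ (r/2) * (x ^ (2:ℝ) + y ^ (2:ℝ)) ^ (r/2) :=
    Real.mul_rpow (by norm_num) (by positivity)
  have key3 : (x ^ (2:ℝ) + y ^ (2:ℝ)) ^ (r/2)
      ≤ 2 ^ (r/2 - 1) * ((x ^ (2:ℝ)) ^ (r/2) + (y ^ (2:ℝ)) ^ (r/2)) :=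
    real_pow_mean hq (by positivity) (by positivity)
  have e3 : (x ^ (2:ℝ)) ^ (r/2) = x ^ r := by
    rw [← Real.rpow_mul hx]; congr 1; ring
  have e4 : (y ^ (2:ℝ)) ^ (r/2) = y ^ r := by
    rw [← Real.rpow_mul hy]; congr 1; ring
  have e5 : (2:ℝ) ^ (r/2) * 2 ^ (r/2 - 1) = 2 ^ (r - 1) := by
    rw [← Real.rpow_add two_pos]; congr 1; ring
  have h2pos : (0:ℝ) < 2 ^ (r/2) := Real.rpow_pos_of_pos two_pos _
  calc |x - y| ^ r + (x + y) ^ r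
      ≤ (|x - y| ^ (2:ℝ) + (x + y) ^ (2:ℝ)) ^ (r/2) := key1
    _ = 2 ^ (r/2) * (x ^ (2:ℝ) + y ^ (2:ℝ)) ^ (r/2) := by rw [e2, key2]
    _ ≤ 2 ^ (r/2) * (2 ^ (r/2 - 1) * ((x ^ (2:ℝ)) ^ (r/2) + (y ^ (2:ℝ)) ^ (r/2))) := by
        apply mul_le_mul_of_nonneg_left key3 h2pos.le
    _ = 2 ^ (r - 1) * (x ^ r + y ^ r) := by rw [e3, e4, ← mul_assoc, e5]

lemma inner_mvt {r : ℝ} (hr1 : 1 < r) (hr2 : r < 2) {s : ℝ} (hs0 : 0 < s) (hs1 : s < 1) :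
    (r-1)*s ≤ (1+s)^(r-1) - (1-s)^(r-1) := by
  have hab : (1:ℝ)-s < 1+s := by linarith
  have hcont : ContinuousOn (fun u : ℝ => u ^ (r-1)) (Set.Icc (1-s) (1+s)) := by
    apply ContinuousOn.rpow_const continuousOn_id
    intro u _
    right; linarith
  have hderiv : ∀ u ∈ Set.Ioo (1-s) (1+s),
      HasDerivAt (fun u : ℝ => u ^ (r-1)) ((r-1) * u ^ (r-1-1)) u := by
    intro u hu
    have hu0 : 0 < u := by have := hu.1; linarith
    exact Real.hasDerivAt_rpow_const (Or.inl hu0.ne')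
  obtain ⟨c, hc, hceq⟩ := exists_hasDerivAt_eq_slope (fun u : ℝ => u ^ (r-1)) _ hab hcont hderiv
  have hc0 : 0 < c := by have := hc.1; linarith
  have hc2 : c ≤ 2 := by have := hc.2; linarith
  have hpow : (1:ℝ)/2 ≤ c ^ (r-1-1) := by
    have h1 : (2:ℝ) ^ (r-1-1) ≤ c ^ (r-1-1) :=
      Real.rpow_le_rpow_of_nonpos hc0 hc2 (by linarith)
    have h2 : ((2:ℝ))^((-1:ℤ):ℝ) ≤ (2:ℝ)^(r-1-1) :=
      Real.rpow_le_rpow_of_exponent_le one_le_two (by push_cast; linarith)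
    rw [Real.rpow_intCast] at h2
    norm_num at h2
    linarith
  have hba : (1+s) - (1-s) = 2*s := by ring
  rw [eq_div_iff (by rw [hba]; exact (mul_pos two_pos hs0).ne')] at hceq
  rw [hba] at hceq
  have hfin := mul_le_mul_of_nonneg_left hpow (by nlinarith : (0:ℝ) ≤ (r-1)*(2*s))
  calc (r-1)*s = (r-1)*(2*s) * (1/2) := by ring
    _ ≤ (r-1)*(2*s) * c ^ (r-1-1) := hfin
    _ = (r-1) * c ^ (r-1-1) * (2*s) := by ring
    _ = (1+s)^(r-1) - (1-s)^(r-1) := hceq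

lemma g_bound {r : ℝ} (hr1 : 1 < r) (hr2 : r < 2) {t : ℝ} (ht0 : 0 ≤ t) (ht1 : t ≤ 1) :
    r*(r-1)/2 * t^2 ≤ (1+t)^r + (1-t)^r - 2 := by
  rcases eq_or_lt_of_le ht0 with h|h
  · rw [← h]; norm_num
  set F : ℝ → ℝ := fun u => (1+u)^r + (1-u)^r - 2 - r*(r-1)/2 * u^2 with hF
  have hFcont : ContinuousOn F (Set.Icc 0 t) := by
    apply ContinuousOn.sub
    apply ContinuousOn.sub
    apply ContinuousOn.add
    · exact ContinuousOn.rpow_const (by fun_prop) (fun u _ => Or.inr (by linarith))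
    · exact ContinuousOn.rpow_const (by fun_prop) (fun u _ => Or.inr (by linarith))
    · fun_prop
    · fun_prop
  have hFderiv : ∀ u ∈ Set.Ioo 0 t,
      HasDerivAt F (r * (1+u)^(r-1) - r * (1-u)^(r-1) - r*(r-1)*u) u := by
    intro u hu
    have hu0 : 0 < u := hu.1
    have hu1 : u < 1 := lt_of_lt_of_le hu.2 ht1
    have hd1 : HasDerivAt (fun y : ℝ => 1 + y) 1 u := by
      simpa using (hasDerivAt_id u).const_add (1:ℝ)
    have hd2 : HasDerivAt (fun y : ℝ => 1 - y) (-1) u := by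
      exact (hasDerivAt_id u).const_sub (1:ℝ)
    have h1 : HasDerivAt (fun y : ℝ => (1+y)^r) (1 * r * (1+u)^(r-1)) u :=
      hd1.rpow_const (Or.inl (by nlinarith : (0:ℝ) < 1 + u).ne')
    have h2 : HasDerivAt (fun y : ℝ => (1-y)^r) ((-1) * r * (1-u)^(r-1)) u :=
      hd2.rpow_const (Or.inl (by nlinarith : (0:ℝ) < 1 - u).ne')
    have h3 : HasDerivAt (fun u : ℝ => r*(r-1)/2 * u^2) (r*(r-1)/2 * (2*u^1)) u :=
      (hasDerivAt_pow 2 u).const_mul (r*(r-1)/2)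
    have := ((h1.add h2).sub_const 2).sub h3
    exact this.congr_deriv (by ring)
  obtain ⟨c, hc, hceq⟩ := exists_hasDerivAt_eq_slope F _ h hFcont hFderiv
  have hF0 : F 0 = 0 := by norm_num [hF]
  have hc1 : c < 1 := lt_of_lt_of_le hc.2 ht1
  have hkey := inner_mvt hr1 hr2 hc.1 hc1
  rw [hF0, sub_zero, sub_zero, eq_div_iff h.ne'] at hceq
  have hFt : 0 ≤ F t := by
    rw [← hceq]
    apply mul_nonneg _ h.le
    have h5 : r * ((r-1)*c) ≤ r * ((1+c)^(r-1) - (1-c)^(r-1)) :=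
      mul_le_mul_of_nonneg_left hkey (by linarith)
    nlinarith [h5]
  simp only [hF] at hFt
  linarith
lemma convexity_defect {r : ℝ} (hr1 : 1 < r) (hr2 : r < 2) {x y : ℝ} (hx : 0 ≤ x) (hy : 0 ≤ y) :
    r*(r-1)/8 * ((x-y)^2 * (x+y)^(r-(2:ℝ))) ≤ x^r + y^r - 2^((1:ℝ)-r)*(x+y)^r := by
  have hr0 : (0:ℝ) < r := by linarith
  by_cases hσ : x + y = 0
  · have hx0 : x = 0 := by linarith
    have hy0 : y = 0 := by linarith
    rw [hx0, hy0]
    norm_num [Real.zero_rpow hr0.ne']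
  have hσ0 : 0 < x + y := lt_of_le_of_ne (by linarith) (Ne.symm hσ)
  set σ := x + y with hσdef
  set t := |x - y|/σ with htdef
  have habs : 0 ≤ |x - y| := abs_nonneg _
  have ht0 : 0 ≤ t := div_nonneg habs hσ0.le
  have ht1 : t ≤ 1 := by
    rw [div_le_one hσ0]
    rcases abs_cases (x - y) with ⟨h1, _⟩ | ⟨h1, _⟩ <;> rw [h1] <;> [linarith; linarith]
  have hg := g_bound hr1 hr2 ht0 ht1
  have h1t : 0 ≤ 1 + t := by linarith
  have h1t' : 0 ≤ 1 - t := by linarith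
  -- x and y are σ/2*(1±t) in some order
  have hxy2 : (x = σ/2*(1+t) ∧ y = σ/2*(1-t)) ∨ (x = σ/2*(1-t) ∧ y = σ/2*(1+t)) := by
    rcases abs_cases (x - y) with ⟨h1, _⟩ | ⟨h1, _⟩
    · left
      constructor <;> (rw [htdef, h1]; field_simp; ring)
    · right
      constructor <;> (rw [htdef, h1]; field_simp; ring)
  have e12 : x^r + y^r = (σ/2)^r * ((1+t)^r + (1-t)^r) := by
    have ea : (σ/2*(1+t))^r = (σ/2)^r * (1+t)^r := Real.mul_rpow (by positivity) h1t
    have eb : (σ/2*(1-t))^r = (σ/2)^r * (1-t)^r := Real.mul_rpow (by positivity) h1t'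
    rcases hxy2 with ⟨ex, ey⟩ | ⟨ex, ey⟩ <;> rw [ex, ey, ea, eb] <;> ring
  have e3 : 2^((1:ℝ)-r) * σ^r = (σ/2)^r * 2 := by
    rw [Real.div_rpow hσ0.le (by norm_num), Real.rpow_sub two_pos, Real.rpow_one]
    have h2r : (0:ℝ) < 2^r := Real.rpow_pos_of_pos two_pos r
    field_simp
  have hm : (σ/2)^r * (r*(r-1)/2 * t^2) ≤ (σ/2)^r * ((1+t)^r + (1-t)^r - 2) :=
    mul_le_mul_of_nonneg_left hg (by positivity)
  have expand : (σ/2)^r * ((1+t)^r + (1-t)^r - 2) = x^r + y^r - 2^((1:ℝ)-r)*σ^r := by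
    rw [mul_sub, ← e12, e3]
  have hL : r*(r-1)/8 * ((x-y)^2 * σ^(r-(2:ℝ))) ≤ (σ/2)^r * (r*(r-1)/2 * t^2) := by
    have hσr : 0 < σ^r := Real.rpow_pos_of_pos hσ0 r
    have hσ2 : (0:ℝ) < σ^(2:ℕ) := by positivity
    have h2 : σ^(r-(2:ℝ)) = σ^r / σ^(2:ℕ) := by
      rw [Real.rpow_sub hσ0]
      congr 1
      rw [show ((2:ℝ)) = ((2:ℕ):ℝ) by norm_num, Real.rpow_natCast]
    have h3 : (σ/2)^r = σ^r / 2^r := Real.div_rpow hσ0.le (by norm_num : (0:ℝ) ≤ 2) r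
    have h4 : (2:ℝ)^r ≤ 4 := by
      have := Real.rpow_le_rpow_of_exponent_le one_le_two hr2.le
      rw [show ((2:ℝ)) = ((2:ℕ):ℝ) by norm_num] at this
      rw [Real.rpow_natCast] at this
      norm_num at this ⊢
      linarith
    have h2r : (0:ℝ) < 2^r := Real.rpow_pos_of_pos two_pos r
    have ht2 : t^2 = (x-y)^2 / σ^(2:ℕ) := by
      rw [htdef, div_pow, sq_abs]
    have key : r*(r-1)/8 ≤ r*(r-1)/2 / 2^r := by
      rw [div_div]
      exact div_le_div_of_nonneg_left (by nlinarith) (by positivity) (by nlinarith [h4])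
    rw [h2, h3, ht2]
    calc r*(r-1)/8 * ((x-y)^2 * (σ^r / σ^2))
        ≤ (r*(r-1)/2/2^r) * ((x-y)^2 * (σ^r / σ^2)) := by
          apply mul_le_mul_of_nonneg_right key (by positivity)
      _ = σ^r/2^r * (r*(r-1)/2 * ((x-y)^2 / σ^2)) := by ring
  calc r*(r-1)/8 * ((x-y)^2 * σ^(r-(2:ℝ)))
      ≤ (σ/2)^r * (r*(r-1)/2 * t^2) := hL
    _ ≤ (σ/2)^r * ((1+t)^r + (1-t)^r - 2) := hm
    _ = x^r + y^r - 2^((1:ℝ)-r)*σ^r := expand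
noncomputable def Cr (r : ℝ) : ℝ :=
  if 2 ≤ r then 1 else ((r*(r-1)/8)⁻¹ * 2^((1:ℝ)-r))^((1:ℝ)/2) * 2^((2-r)/2)

noncomputable def θr (r : ℝ) : ℝ := if 2 ≤ r then 1/r else 1/2

lemma Cr_pos {r : ℝ} (hr : 1 < r) : 0 < Cr r := by
  rw [Cr]
  split_ifs
  · norm_num
  · have h1 : (0:ℝ) < r*(r-1)/8 := by nlinarith
    have h2 : (0:ℝ) < 2^((1:ℝ)-r) := Real.rpow_pos_of_pos two_pos _
    positivity

lemma θr_pos {r : ℝ} (hr : 1 < r) : 0 < θr r := by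
  rw [θr]
  split_ifs
  · rw [one_div]; exact inv_pos.2 (by linarith)
  · norm_num

section UC
variable {G : Type*} {p : ℝ≥0∞} [Fact (1 ≤ p)]

lemma uc_nonneg (hr : 1 < p.toReal) {a b : lp (fun _ : G => ℂ) p}
    (ha : IsNonneg a) (hb : IsNonneg b) (hna : ‖a‖ = 1) (hnb : ‖b‖ = 1) :
    ‖a - b‖ ≤ Cr p.toReal * (2^p.toReal - ‖a+b‖^p.toReal) ^ θr p.toReal := by
  have hr0 : (0:ℝ) < p.toReal := by linarith
  set r := p.toReal with hrdef
  set x : G → ℝ := fun g => (a g).re with hxdef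
  set y : G → ℝ := fun g => (b g).re with hydef
  have hax : ∀ g, a g = ((x g : ℝ) : ℂ) := by
    intro g
    have h := ha g
    rw [Complex.le_def] at h
    simp only [Complex.zero_re, Complex.zero_im] at h
    apply Complex.ext
    · simp [hxdef]
    · simp [hxdef, ← h.2]
  have hby : ∀ g, b g = ((y g : ℝ) : ℂ) := by
    intro g
    have h := hb g
    rw [Complex.le_def] at h
    simp only [Complex.zero_re, Complex.zero_im] at h
    apply Complex.ext
    · simp [hydef]
    · simp [hydef, ← h.2]
  have hx0 : ∀ g, 0 ≤ x g := by
    intro g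
    have h := ha g
    rw [Complex.le_def] at h
    simpa using h.1
  have hy0 : ∀ g, 0 ≤ y g := by
    intro g
    have h := hb g
    rw [Complex.le_def] at h
    simpa using h.1
  have hna' : ∀ g, ‖a g‖ = x g := by
    intro g; rw [hax g, Complex.norm_real, Real.norm_eq_abs, abs_of_nonneg (hx0 g)]
  have hnb' : ∀ g, ‖b g‖ = y g := by
    intro g; rw [hby g, Complex.norm_real, Real.norm_eq_abs, abs_of_nonneg (hy0 g)]
  have hnab : ∀ g, ‖(a + b) g‖ = x g + y g := by
    intro g
    have e : (a + b) g = a g + b g := congr_fun (lp.coeFn_add a b) g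
    rw [e, hax g, hby g, ← Complex.ofReal_add, Complex.norm_real, Real.norm_eq_abs,
      abs_of_nonneg (add_nonneg (hx0 g) (hy0 g))]
  have hnsub : ∀ g, ‖(a - b) g‖ = |x g - y g| := by
    intro g
    have e : (a - b) g = a g - b g := congr_fun (lp.coeFn_sub a b) g
    rw [e, hax g, hby g, ← Complex.ofReal_sub, Complex.norm_real, Real.norm_eq_abs]
  -- HasSum facts
  have ha1 : HasSum (fun g => x g ^ r) 1 := by
    have h := lp.hasSum_norm hr0 a
    rw [hna, Real.one_rpow] at h
    have e : (fun g => ‖a g‖ ^ r) = fun g => x g ^ r := funext fun g => by rw [hna' g]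
    rwa [e] at h
  have hb1 : HasSum (fun g => y g ^ r) 1 := by
    have h := lp.hasSum_norm hr0 b
    rw [hnb, Real.one_rpow] at h
    have e : (fun g => ‖b g‖ ^ r) = fun g => y g ^ r := funext fun g => by rw [hnb' g]
    rwa [e] at h
  have hS : HasSum (fun g => (x g + y g) ^ r) (‖a+b‖^r) := by
    have h := lp.hasSum_norm hr0 (a + b)
    have e : (fun g => ‖(a+b) g‖ ^ r) = fun g => (x g + y g) ^ r := funext fun g => by
      rw [hnab g]
    rwa [e] at h
  have hSm : HasSum (fun g => |x g - y g| ^ r) (‖a-b‖^r) := by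
    have h := lp.hasSum_norm hr0 (a - b)
    have e : (fun g => ‖(a-b) g‖ ^ r) = fun g => |x g - y g| ^ r := funext fun g => by
      rw [hnsub g]
    rwa [e] at h
  have habn : ‖a + b‖ ≤ 2 := by
    calc ‖a + b‖ ≤ ‖a‖ + ‖b‖ := norm_add_le a b
    _ = 2 := by rw [hna, hnb]; norm_num
  have hS_le : ‖a+b‖^r ≤ 2^r := Real.rpow_le_rpow (norm_nonneg _) habn hr0.le
  have hD0 : 0 ≤ 2^r - ‖a+b‖^r := by linarith
  have hsubr0 : 0 ≤ ‖a-b‖^r := Real.rpow_nonneg (norm_nonneg _) r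
  have hnormsub : ‖a - b‖ = (‖a-b‖^r)^r⁻¹ := (Real.rpow_rpow_inv (norm_nonneg _) hr0.ne').symm
  by_cases hc : 2 ≤ r
  · -- Clarkson case
    have hpt : ∀ g, |x g - y g| ^ r + (x g + y g) ^ r ≤ 2^(r-1) * (x g ^ r + y g ^ r) :=
      fun g => clarkson hc (hx0 g) (hy0 g)
    have hle := hasSum_le hpt (hSm.add hS) ((ha1.add hb1).mul_left (2^(r-1)))
    have e2 : (2:ℝ)^(r-1) * (1 + 1) = 2^r := by
      rw [Real.rpow_sub two_pos, Real.rpow_one]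
      field_simp
      norm_num
    rw [e2] at hle
    have hfin : ‖a-b‖^r ≤ 2^r - ‖a+b‖^r := by linarith
    rw [hnormsub, Cr, θr, if_pos hc, if_pos hc, one_mul, one_div]
    exact Real.rpow_le_rpow hsubr0 hfin (by positivity)
  · -- convexity defect case
    push_neg at hc
    set c := r*(r-1)/8 with hcdef
    have hcpos : 0 < c := by rw [hcdef]; nlinarith
    set u : G → ℝ := fun g => (x g - y g)^2 * (x g + y g)^(r-(2:ℝ)) with hudef
    have hu0 : ∀ g, 0 ≤ u g := fun g =>
      mul_nonneg (sq_nonneg _) (Real.rpow_nonneg (add_nonneg (hx0 g) (hy0 g)) _)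
    have hDpt : ∀ g, c * u g ≤ x g ^ r + y g ^ r - 2^((1:ℝ)-r) * (x g + y g)^r :=
      fun g => convexity_defect hr hc (hx0 g) (hy0 g)
    have hDsum : HasSum (fun g => x g ^ r + y g ^ r - 2^((1:ℝ)-r) * (x g + y g)^r)
        (1 + 1 - 2^((1:ℝ)-r) * ‖a+b‖^r) := (ha1.add hb1).sub (hS.mul_left _)
    have hu_le : ∀ g, u g ≤ c⁻¹ * (x g ^ r + y g ^ r - 2^((1:ℝ)-r) * (x g + y g)^r) := by
      intro g
      rw [le_inv_mul_iff₀ hcpos]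
      exact hDpt g
    have hu_summable : Summable u :=
      Summable.of_nonneg_of_le hu0 hu_le (hDsum.summable.mul_left c⁻¹)
    have htsum_u : ∑' g, u g ≤ c⁻¹ * (1 + 1 - 2^((1:ℝ)-r) * ‖a+b‖^r) := by
      have := Summable.tsum_le_tsum hu_le hu_summable (hDsum.summable.mul_left c⁻¹)
      rwa [(hDsum.mul_left c⁻¹).tsum_eq] at this
    have htsum_u0 : 0 ≤ ∑' g, u g := tsum_nonneg hu0
    -- Hölder
    have hpq : ((2:ℝ)/r).HolderConjugate (2/(2-r)) := by
      rw [Real.holderConjugate_iff]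
      constructor
      · rw [lt_div_iff₀ hr0]; linarith
      · rw [inv_div, inv_div]; field_simp; ring
    set A : G → ℝ := fun g => (u g)^(r/2) with hAdef
    set B : G → ℝ := fun g => ((x g + y g)^r)^((2-r)/2) with hBdef
    have hA0 : ∀ g, 0 ≤ A g := fun g => Real.rpow_nonneg (hu0 g) _
    have hB0 : ∀ g, 0 ≤ B g := fun g =>
      Real.rpow_nonneg (Real.rpow_nonneg (add_nonneg (hx0 g) (hy0 g)) _) _
    have hAP : ∀ g, A g ^ ((2:ℝ)/r) = u g := by
      intro g
      rw [hAdef, ← Real.rpow_mul (hu0 g)]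
      rw [show r/2 * (2/r) = 1 by field_simp, Real.rpow_one]
    have hBQ : ∀ g, B g ^ ((2:ℝ)/(2-r)) = (x g + y g)^r := by
      intro g
      rw [hBdef, ← Real.rpow_mul (Real.rpow_nonneg (add_nonneg (hx0 g) (hy0 g)) _)]
      have h2rne : (2:ℝ) - r ≠ 0 := by linarith
      rw [show (2-r)/2 * (2/(2-r)) = 1 by field_simp, Real.rpow_one]
    have hA_sum : Summable (fun g => A g ^ ((2:ℝ)/r)) := by
      apply Summable.congr hu_summable
      intro g
      rw [hAP g]
    have hB_sum : Summable (fun g => B g ^ ((2:ℝ)/(2-r))) := by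
      apply Summable.congr hS.summable
      intro g
      rw [hBQ g]
    obtain ⟨-, hHolder⟩ := Real.summable_and_inner_le_Lp_mul_Lq_tsum_of_nonneg hpq hA0 hB0 hA_sum hB_sum
    have hABptw : ∀ g, A g * B g = |x g - y g| ^ r := by
      intro g
      by_cases hσ : x g + y g = 0
      · have hx' : x g = 0 := le_antisymm (by have := hy0 g; linarith) (hx0 g)
        have hy' : y g = 0 := le_antisymm (by have := hx0 g; linarith) (hy0 g)
        have hu' : u g = 0 := by
          rw [hudef]
          simp [hx', hy']
        have hA' : A g = 0 := by
          rw [hAdef]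
          simp only [hu']
          exact Real.zero_rpow (div_pos hr0 two_pos).ne'
        rw [hA', zero_mul, hx', hy']
        simp [Real.zero_rpow hr0.ne']
      · have hσpos : 0 < x g + y g :=
          lt_of_le_of_ne (add_nonneg (hx0 g) (hy0 g)) (Ne.symm hσ)
        have eA : A g = |x g - y g| ^ r * ((x g + y g)^(r-(2:ℝ)))^(r/2) := by
          rw [hAdef]
          simp only [hudef]
          rw [Real.mul_rpow (sq_nonneg _) (Real.rpow_nonneg hσpos.le _)]
          congr 1
          rw [← sq_abs, ← Real.rpow_natCast_mul (abs_nonneg _) 2 (r/2)]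
          congr 1
          push_cast
          ring
        have eB : ((x g + y g)^(r-(2:ℝ)))^(r/2) * B g = 1 := by
          rw [hBdef]
          simp only
          rw [← Real.rpow_mul hσpos.le, ← Real.rpow_mul hσpos.le,
            ← Real.rpow_add hσpos]
          rw [show (r-(2:ℝ))*(r/2) + r*((2-r)/2) = 0 by ring, Real.rpow_zero]
        rw [eA, mul_assoc, eB, mul_one]
    -- assemble
    have hABsum : ∑' g, A g * B g = ‖a-b‖^r := by
      rw [tsum_congr hABptw, hSm.tsum_eq]
    have hAPsum : ∑' g, A g ^ ((2:ℝ)/r) = ∑' g, u g := tsum_congr hAP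
    have hBQsum : ∑' g, B g ^ ((2:ℝ)/(2-r)) = ‖a+b‖^r := by
      rw [tsum_congr hBQ, hS.tsum_eq]
    rw [hABsum, hAPsum, hBQsum, one_div_div, one_div_div] at hHolder
    -- hHolder : ‖a-b‖^r ≤ (∑' u)^(r/2) * (‖a+b‖^r)^((2-r)/2)
    set K : ℝ := c⁻¹ * 2^((1:ℝ)-r) with hKdef
    have hKpos : 0 < K := by
      have h2 : (0:ℝ) < 2^((1:ℝ)-r) := Real.rpow_pos_of_pos two_pos _
      positivity
    have e21 : (2:ℝ)^((1:ℝ)-r) * 2^r = 2 := by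
      rw [← Real.rpow_add two_pos]; norm_num
    have hT_le : ∑' g, u g ≤ K * (2^r - ‖a+b‖^r) := by
      have eD : c⁻¹ * (1 + 1 - 2^((1:ℝ)-r) * ‖a+b‖^r) = K * (2^r - ‖a+b‖^r) := by
        rw [hKdef]
        linear_combination (-1:ℝ) * c⁻¹ * e21
      rw [← eD]
      exact htsum_u
    have hKD0 : 0 ≤ K * (2^r - ‖a+b‖^r) := mul_nonneg hKpos.le hD0
    have hstep1 : ‖a-b‖^r ≤ (K * (2^r - ‖a+b‖^r))^(r/2) * (2^r)^((2-r)/2) := by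
      calc ‖a-b‖^r ≤ (∑' g, u g)^(r/2) * (‖a+b‖^r)^((2-r)/2) := hHolder
        _ ≤ (K * (2^r - ‖a+b‖^r))^(r/2) * (2^r)^((2-r)/2) := by
            apply mul_le_mul
            · exact Real.rpow_le_rpow htsum_u0 hT_le (by positivity)
            · exact Real.rpow_le_rpow (Real.rpow_nonneg (norm_nonneg _) _) hS_le
                (by linarith)
            · exact Real.rpow_nonneg (Real.rpow_nonneg (norm_nonneg _) _) _
            · exact Real.rpow_nonneg hKD0 _
    -- take r-th root
    have hRHS0 : 0 ≤ (K * (2^r - ‖a+b‖^r))^(r/2) * (2^r)^((2-r)/2) :=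
      mul_nonneg (Real.rpow_nonneg hKD0 _) (Real.rpow_nonneg (by positivity) _)
    have hfinal : ‖a - b‖ ≤ ((K * (2^r - ‖a+b‖^r))^(r/2) * (2^r)^((2-r)/2))^r⁻¹ := by
      rw [hnormsub]
      exact Real.rpow_le_rpow hsubr0 hstep1 (by positivity)
    have hrne : r ≠ 0 := hr0.ne'
    have hsplit : ((K * (2^r - ‖a+b‖^r))^(r/2) * (2^r)^((2-r)/2))^r⁻¹
        = K^((1:ℝ)/2) * (2^r - ‖a+b‖^r)^((1:ℝ)/2) * 2^((2-r)/2) := by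
      rw [Real.mul_rpow (Real.rpow_nonneg hKD0 _) (Real.rpow_nonneg (by positivity) _),
        ← Real.rpow_mul hKD0,
        show r/2 * r⁻¹ = (1:ℝ)/2 by field_simp,
        Real.mul_rpow hKpos.le hD0,
        ← Real.rpow_mul (by norm_num : (0:ℝ) ≤ 2),
        ← Real.rpow_mul (by norm_num : (0:ℝ) ≤ 2),
        show r * ((2-r)/2) * r⁻¹ = (2-r)/2 by field_simp]
    have hgoal : Cr r * (2^r - ‖a+b‖^r)^(θr r)
        = K^((1:ℝ)/2) * (2^r - ‖a+b‖^r)^((1:ℝ)/2) * 2^((2-r)/2) := by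
      rw [Cr, θr, if_neg (not_le.2 hc), if_neg (not_le.2 hc), hKdef, hcdef]
      ring
    rw [hgoal, ← hsplit]
    exact hfinal

end UC
section Main
variable {G : Type*} [Group G] [DecidableEq G] {p : ℝ≥0∞} [Fact (1 ≤ p)]

lemma lam_nonneg (hp' : p ≠ ⊤) {lam : G → (lp (fun _ : G => ℂ) p →L[ℂ] lp (fun _ : G => ℂ) p)}
    (hlam : IsLeftReg lam) (s : G) {ξ : lp (fun _ : G => ℂ) p} (hξ : IsNonneg ξ) :
    IsNonneg (lam s ξ) := by
  intro g
  rw [lam_apply hp' hlam s ξ g]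
  exact hξ _

lemma key {lam : G → (lp (fun _ : G => ℂ) p →L[ℂ] lp (fun _ : G => ℂ) p)}
    (hp : 1 < p) (hp' : p ≠ ⊤) (hlam : IsLeftReg lam)
    (h : ∀ E : Finset G, (1 : G) ∈ E → ‖∑ t ∈ E, lam t‖ = (E.card : ℝ))
    (F : Finset G) {δ : ℝ} (hδ0 : 0 < δ) (hδ1 : δ ≤ 1) :
    ∃ ξ : lp (fun _ : G => ℂ) p, IsNonneg ξ ∧ ‖ξ‖ = 1 ∧
      ∀ s ∈ F, ‖lam s ξ - ξ‖ ≤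
        Cr p.toReal * (2^p.toReal - (2-δ)^p.toReal) ^ θr p.toReal := by
  have hr : 1 < p.toReal := by
    rw [← ENNReal.toReal_one]
    exact (ENNReal.toReal_lt_toReal (by simp) hp').2 hp
  have hr0 : (0:ℝ) < p.toReal := by linarith
  set r := p.toReal with hrdef
  -- RHS is nonneg
  have hδ2 : (0:ℝ) ≤ 2 - δ := by linarith
  have hbase : (2-δ:ℝ)^r ≤ 2^r := Real.rpow_le_rpow hδ2 (by linarith) hr0.le
  have hRHS0 : 0 ≤ Cr r * (2^r - (2-δ)^r) ^ θr r := by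
    apply mul_nonneg (Cr_pos hr).le
    exact Real.rpow_nonneg (by linarith) _
  set E' : Finset G := insert (1:G) F with hE'
  set n : ℕ := E'.card with hn
  have hmem1 : (1:G) ∈ E' := Finset.mem_insert_self _ _
  have hn1 : 1 ≤ n := Finset.card_pos.2 ⟨1, hmem1⟩
  have hnorm : ‖∑ t ∈ E', lam t‖ = (n:ℝ) := h E' hmem1
  have hlt : (n:ℝ) - δ < ‖∑ t ∈ E', lam t‖ := by rw [hnorm]; linarith
  obtain ⟨x0, hx0n, hx0⟩ := (∑ t ∈ E', lam t).exists_lt_apply_of_lt_opNorm hlt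
  have hndnn : (0:ℝ) ≤ (n:ℝ) - δ := by
    have : (1:ℝ) ≤ (n:ℝ) := by exact_mod_cast hn1
    linarith
  have hx0ne : x0 ≠ 0 := by
    intro h0
    rw [h0] at hx0
    simp only [map_zero, norm_zero] at hx0
    linarith
  have hx0pos : 0 < ‖x0‖ := norm_pos_iff.2 hx0ne
  set ξ0 : lp (fun _ : G => ℂ) p := (((‖x0‖)⁻¹ : ℝ) : ℂ) • x0 with hξ0
  have hξ0norm : ‖ξ0‖ = 1 := by
    rw [hξ0, norm_smul, Complex.norm_real, Real.norm_eq_abs,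
      abs_of_nonneg (inv_nonneg.2 hx0pos.le)]
    exact inv_mul_cancel₀ hx0pos.ne'
  have hSξ0 : (n:ℝ) - δ < ‖(∑ t ∈ E', lam t) ξ0‖ := by
    rw [hξ0, map_smul, norm_smul, Complex.norm_real, Real.norm_eq_abs,
      abs_of_nonneg (inv_nonneg.2 hx0pos.le)]
    have h1 : (1:ℝ) ≤ ‖x0‖⁻¹ := (one_le_inv₀ hx0pos).2 hx0n.le
    calc (n:ℝ) - δ < ‖(∑ t ∈ E', lam t) x0‖ := hx0
      _ ≤ ‖x0‖⁻¹ * ‖(∑ t ∈ E', lam t) x0‖ := le_mul_of_one_le_left (norm_nonneg _) h1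
  set ξ : lp (fun _ : G => ℂ) p := absv hp' ξ0 with hξdef
  have hξnn : IsNonneg ξ := absv_nonneg hp' ξ0
  have hξnorm : ‖ξ‖ = 1 := by rw [hξdef, absv_norm hp' ξ0, hξ0norm]
  -- coordinates of sum operator
  have hScoord : ∀ (z : lp (fun _ : G => ℂ) p) (g : G),
      ((∑ t ∈ E', lam t) z) g = ∑ t ∈ E', z (t⁻¹ * g) := by
    intro z g
    rw [ContinuousLinearMap.sum_apply]
    have := congr_fun (lp.coeFn_sum (fun t => lam t z) E') g
    rw [this]
    rw [Finset.sum_apply]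
    exact Finset.sum_congr rfl fun t _ => lam_apply hp' hlam t z g
  have hSξ : (n:ℝ) - δ < ‖(∑ t ∈ E', lam t) ξ‖ := by
    apply lt_of_lt_of_le hSξ0
    apply norm_le_of_coord hp'
    intro g
    rw [hScoord ξ0 g, hScoord ξ g]
    calc ‖∑ t ∈ E', ξ0 (t⁻¹ * g)‖ ≤ ∑ t ∈ E', ‖ξ0 (t⁻¹ * g)‖ := norm_sum_le _ _
      _ = ‖∑ t ∈ E', (‖ξ0 (t⁻¹ * g)‖ : ℂ)‖ := by
          rw [← Complex.ofReal_sum, Complex.norm_real, Real.norm_eq_abs,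
            abs_of_nonneg (Finset.sum_nonneg fun t _ => norm_nonneg _)]
      _ = ‖∑ t ∈ E', ξ (t⁻¹ * g)‖ := by congr 1
  refine ⟨ξ, hξnn, hξnorm, ?_⟩
  intro s hsF
  by_cases hs1 : s = 1
  · rw [hs1, lam_one hp' hlam ξ]
    simpa using hRHS0
  · have hmems : s ∈ E' := Finset.mem_insert_of_mem hsF
    have hserase : s ∈ E'.erase 1 := Finset.mem_erase.2 ⟨hs1, hmems⟩
    have hn2 : 2 ≤ n := by
      have hsub : ({1, s} : Finset G) ⊆ E' := by
        intro t ht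
        rcases Finset.mem_insert.1 ht with rfl | ht
        · exact hmem1
        · rw [Finset.mem_singleton.1 ht]; exact hmems
      have hcard2 : ({1, s} : Finset G).card = 2 := by
        rw [Finset.card_insert_of_notMem (by simp [Ne.symm hs1]), Finset.card_singleton]
      calc 2 = ({1,s} : Finset G).card := hcard2.symm
        _ ≤ n := Finset.card_le_card hsub
    set R : lp (fun _ : G => ℂ) p := ∑ t ∈ (E'.erase 1).erase s, lam t ξ with hRdef
    have hdecomp : (∑ t ∈ E', lam t) ξ = ξ + (lam s ξ + R) := by
      rw [ContinuousLinearMap.sum_apply]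
      rw [← Finset.add_sum_erase E' (fun t => lam t ξ) hmem1]
      rw [← Finset.add_sum_erase (E'.erase 1) (fun t => lam t ξ) hserase]
      rw [lam_one hp' hlam ξ]
    have hcard_rest : ((((E'.erase 1).erase s).card : ℕ) : ℝ) = (n:ℝ) - 2 := by
      rw [Finset.card_erase_of_mem hserase, Finset.card_erase_of_mem hmem1]
      rw [Nat.cast_sub (by omega), Nat.cast_sub (by omega)]
      push_cast
      ring
    have hRnorm : ‖R‖ ≤ (n:ℝ) - 2 := by
      calc ‖R‖ ≤ ∑ t ∈ (E'.erase 1).erase s, ‖lam t ξ‖ := norm_sum_le _ _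
        _ = ∑ _t ∈ (E'.erase 1).erase s, (1:ℝ) :=
            Finset.sum_congr rfl fun t _ => by rw [lam_norm hp' hlam, hξnorm]
        _ = ((((E'.erase 1).erase s).card : ℕ) : ℝ) := by
            rw [Finset.sum_const, nsmul_eq_mul, mul_one]
        _ = (n:ℝ) - 2 := hcard_rest
    have hplus : 2 - δ ≤ ‖lam s ξ + ξ‖ := by
      have h1 : ‖(∑ t ∈ E', lam t) ξ‖ ≤ ‖ξ + lam s ξ‖ + ‖R‖ := by
        rw [hdecomp]
        calc ‖ξ + (lam s ξ + R)‖ = ‖(ξ + lam s ξ) + R‖ := by rw [add_assoc]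
          _ ≤ ‖ξ + lam s ξ‖ + ‖R‖ := norm_add_le _ _
      have h2 : ‖lam s ξ + ξ‖ = ‖ξ + lam s ξ‖ := by rw [add_comm]
      rw [h2]
      linarith
    have huc := uc_nonneg hr (lam_nonneg hp' hlam s hξnn) hξnn
      (by rw [lam_norm hp' hlam, hξnorm]) hξnorm
    have hmono : 2^r - ‖lam s ξ + ξ‖^r ≤ 2^r - (2-δ)^r := by
      have := Real.rpow_le_rpow hδ2 hplus hr0.le
      linarith
    have hD0' : 0 ≤ 2^r - ‖lam s ξ + ξ‖^r := by
      have hab : ‖lam s ξ + ξ‖ ≤ 2 := by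
        calc ‖lam s ξ + ξ‖ ≤ ‖lam s ξ‖ + ‖ξ‖ := norm_add_le _ _
          _ = 2 := by rw [lam_norm hp' hlam, hξnorm]; norm_num
      have := Real.rpow_le_rpow (norm_nonneg _) hab hr0.le
      linarith
    calc ‖lam s ξ - ξ‖ ≤ Cr r * (2^r - ‖lam s ξ + ξ‖^r)^θr r := huc
      _ ≤ Cr r * (2^r - (2-δ)^r)^θr r := by
          apply mul_le_mul_of_nonneg_left _ (Cr_pos hr).le
          exact Real.rpow_le_rpow hD0' hmono (θr_pos hr).le

end Main
theorem stmt5 {G : Type u} [Group G] [DecidableEq G] {p : ℝ≥0∞} [Fact (1 ≤ p)]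
    (hp : 1 < p) (hp' : p ≠ ⊤)
    (lam : G → (lp (fun _ : G => ℂ) p →L[ℂ] lp (fun _ : G => ℂ) p))
    (hlam : IsLeftReg lam)
    (h : ∀ E : Finset G, (1 : G) ∈ E → ‖∑ t ∈ E, lam t‖ = (E.card : ℝ)) :
    ∃ (ι : Type u) (l : Filter ι) (f : ι → lp (fun _ : G => ℂ) p), l.NeBot ∧
      (∀ α, IsNonneg (f α) ∧ ‖f α‖ = 1) ∧
      ∀ s : G, Tendsto (fun α => ‖lam s (f α) - f α‖) l (𝓝 0) := by
  have hr : 1 < p.toReal := by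
    rw [← ENNReal.toReal_one]
    exact (ENNReal.toReal_lt_toReal (by simp) hp').2 hp
  set r := p.toReal with hrdef
  have KEY : ∀ α : Finset G × ℕ, ∃ ξ : lp (fun _ : G => ℂ) p, IsNonneg ξ ∧ ‖ξ‖ = 1 ∧
      ∀ s ∈ α.1, ‖lam s ξ - ξ‖ ≤ Cr r * (2^r - (2 - 1/(α.2+1:ℝ))^r) ^ θr r := by
    intro α
    apply key hp hp' hlam h α.1 (δ := 1/(α.2+1:ℝ))
    · positivity
    · rw [div_le_one (by positivity)]
      have : (0:ℝ) ≤ (α.2 : ℝ) := Nat.cast_nonneg _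
      linarith
  choose f hf1 hf2 hf3 using KEY
  refine ⟨Finset G × ℕ, atTop, f, atTop_neBot, fun α => ⟨hf1 α, hf2 α⟩, ?_⟩
  intro s
  have hψ : Tendsto (fun n : ℕ => Cr r * (2^r - (2 - 1/(n+1:ℝ))^r) ^ θr r) atTop (𝓝 0) := by
    have h1 : Tendsto (fun n : ℕ => 1/(n+1:ℝ)) atTop (𝓝 0) :=
      tendsto_one_div_add_atTop_nhds_zero_nat
    have h2 : Tendsto (fun n : ℕ => 2 - 1/(n+1:ℝ)) atTop (𝓝 2) := by
      simpa using tendsto_const_nhds.sub h1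
    have h3 : Tendsto (fun n : ℕ => (2 - 1/(n+1:ℝ))^r) atTop (𝓝 ((2:ℝ)^r)) :=
      ((Real.continuousAt_rpow_const 2 r (Or.inl two_ne_zero)).tendsto).comp h2
    have h4 : Tendsto (fun n : ℕ => 2^r - (2 - 1/(n+1:ℝ))^r) atTop (𝓝 0) := by
      have h4' := Filter.Tendsto.sub (tendsto_const_nhds (x := (2:ℝ)^r) (f := (atTop : Filter ℕ))) h3
      simpa using h4'
    have h5 : ContinuousAt (fun z : ℝ => z ^ θr r) 0 :=
      Real.continuousAt_rpow_const 0 _ (Or.inr (θr_pos hr).le)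
    have h6 := (h5.tendsto).comp h4
    rw [Real.zero_rpow (θr_pos hr).ne'] at h6
    have h7 := h6.const_mul (Cr r)
    simpa using h7
  have hsnd : Tendsto (Prod.snd : Finset G × ℕ → ℕ) atTop atTop := by
    rw [← Filter.prod_atTop_atTop_eq]
    exact tendsto_snd
  refine squeeze_zero' (Filter.Eventually.of_forall fun α => norm_nonneg _) ?_ (hψ.comp hsnd)
  filter_upwards [Filter.eventually_ge_atTop (({s}, 0) : Finset G × ℕ)] with α hα
  exact hf3 α s (Finset.singleton_subset_iff.1 hα.1)
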